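/- Let α ∈ (0,2), γ ≥ 0, and let ν₀ be an α-stable Lévy measure (polar decomposition with finite spherical measure μ₀) that is a γ-measure at the unit sphere, i.e., ν₀(B(x,r)) ≤ m₀ r^γ for all |x| = 1 and 0 < r < 1/2. Set m₁ = max{m₀, 2^γ |μ₀| / α}. Then for every Borel set A ⊂ ℝ^d, ν₀(A) ≤ m₁ · δ(A)^{-α-γ} · diam(A)^γ, where δ(A) = dist(A, 0) and diam(A) is the diameter of A. -/

import Mathlib

open MeasureTheory Set

private lemma scale_Ioi (c : ℝ) (hc : 0 < c) (H : ℝ → ENNReal) (hH : Measurable H) :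
    ∫⁻ s in Set.Ioi (0:ℝ), H (c⁻¹ * s) = ENNReal.ofReal c * ∫⁻ t in Set.Ioi (0:ℝ), H t := by
  have hc' : c⁻¹ ≠ 0 := by positivity
  have hmap : Measure.map (c⁻¹ * ·) volume = ENNReal.ofReal c • volume := by
    rw [Real.map_volume_mul_left hc', inv_inv, abs_of_pos hc]
  have h1 : ∀ s : ℝ, (Ioi (0:ℝ)).indicator (fun s => H (c⁻¹ * s)) s
      = (Ioi (0:ℝ)).indicator H (c⁻¹ * s) := by
    intro s
    by_cases hs : s ∈ Ioi (0:ℝ)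
    · rw [Set.indicator_of_mem hs, Set.indicator_of_mem (by simpa using mul_pos (inv_pos.2 hc) hs)]
    · rw [Set.indicator_of_notMem hs, Set.indicator_of_notMem]
      simp only [mem_Ioi, not_lt] at hs ⊢
      exact mul_nonpos_of_nonneg_of_nonpos (by positivity) hs
  calc ∫⁻ s in Ioi (0:ℝ), H (c⁻¹ * s)
      = ∫⁻ s, (Ioi (0:ℝ)).indicator (fun s => H (c⁻¹ * s)) s :=
        (lintegral_indicator measurableSet_Ioi _).symm
    _ = ∫⁻ s, (Ioi (0:ℝ)).indicator H (c⁻¹ * s) := by simp_rw [h1]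
    _ = ∫⁻ s, (Ioi (0:ℝ)).indicator H s ∂(Measure.map (c⁻¹ * ·) volume) := by
        rw [lintegral_map (hH.indicator measurableSet_Ioi) (measurable_const_mul _)]
    _ = ENNReal.ofReal c * ∫⁻ t in Ioi (0:ℝ), H t := by
        rw [hmap, lintegral_smul_measure, lintegral_indicator measurableSet_Ioi _, smul_eq_mul]

private lemma tail_int (α δ : ℝ) (hα : 0 < α) (hδ : 0 < δ) :
    ∫⁻ s in Set.Ici δ, ENNReal.ofReal (s ^ (-1 - α)) = ENNReal.ofReal (δ ^ (-α) / α) := by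
  rw [setLIntegral_congr (MeasureTheory.Ioi_ae_eq_Ici (a := δ)).symm]
  rw [← ofReal_integral_eq_lintegral_ofReal (integrableOn_Ioi_rpow_of_lt (by linarith) hδ)
    ((ae_restrict_mem measurableSet_Ioi).mono fun s hs =>
      le_of_lt (Real.rpow_pos_of_pos (lt_trans hδ hs) _))]
  rw [integral_Ioi_rpow_of_lt (by linarith) hδ]
  congr 1
  have : (-1 : ℝ) - α + 1 = -α := by ring
  rw [this]
  field_simp

theorem gamma_measure_estimate (d : ℕ) (α γ m₀ : ℝ) (hα0 : 0 < α) (hα2 : α < 2)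
    (hγ : 0 ≤ γ) (hm₀ : 0 < m₀)
    (μ₀ ν₀ : Measure (EuclideanSpace ℝ (Fin d))) [IsFiniteMeasure μ₀]
    (hsupp : ∀ᵐ θ ∂μ₀, ‖θ‖ = 1)
    (hν : ∀ A : Set (EuclideanSpace ℝ (Fin d)), MeasurableSet A →
      ν₀ A = ∫⁻ θ, (∫⁻ s in Set.Ioi (0 : ℝ),
        A.indicator (fun _ => ENNReal.ofReal (s ^ (-1 - α))) (s • θ)) ∂μ₀)
    (hgam : ∀ x : EuclideanSpace ℝ (Fin d), ‖x‖ = 1 → ∀ r : ℝ, 0 < r → r < 1 / 2 →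
      ν₀ (Metric.ball x r) ≤ ENNReal.ofReal (m₀ * r ^ γ)) :
    ∀ A : Set (EuclideanSpace ℝ (Fin d)), MeasurableSet A →
      ν₀ A ≤ ENNReal.ofReal (max m₀ (2 ^ γ * (μ₀ Set.univ).toReal / α)) *
        (ENNReal.ofReal (Metric.infDist 0 A)) ^ (-(α + γ)) * (EMetric.diam A) ^ γ := by
  intro A hA
  set m₁ : ℝ := max m₀ (2 ^ γ * (μ₀ Set.univ).toReal / α) with hm₁def
  have hm₁pos : 0 < m₁ := lt_of_lt_of_le hm₀ (le_max_left _ _)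
  set δ : ℝ := Metric.infDist 0 A with hδdef
  have hδ0 : 0 ≤ δ := Metric.infDist_nonneg
  rcases eq_or_lt_of_le hδ0 with hδ | hδ
  · -- δ = 0
    rcases eq_or_ne (EMetric.diam A) 0 with hdiam | hdiam
    · -- A subsingleton
      have hsub : A.Subsingleton := EMetric.diam_eq_zero_iff.mp hdiam
      have hzero : ν₀ A = 0 := by
        rw [hν A hA]
        rw [lintegral_congr_ae (g := fun _ => 0) (hsupp.mono ?_), lintegral_zero]
        intro θ hθ
        rw [setLIntegral_congr_fun measurableSet_Ioi ?_,
          lintegral_zero]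
        intro s hs
        simp only [mem_Ioi] at hs
        apply Set.indicator_of_notMem
        intro hmem
        have hAeq : A = {s • θ} := hsub.eq_singleton_of_mem hmem
        have h2 : δ = s := by
          rw [hδdef, hAeq, Metric.infDist_singleton, dist_zero_left, norm_smul, hθ,
            Real.norm_eq_abs, abs_of_pos hs, mul_one]
        exact hs.ne' (hδ.trans h2).symm
      rw [hzero]; exact zero_le
    · -- diam ≠ 0, RHS = ⊤
      have h1 : (ENNReal.ofReal δ) ^ (-(α + γ)) = ⊤ := by
        rw [← hδ, ENNReal.ofReal_zero, ENNReal.zero_rpow_of_neg (by linarith)]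
      rw [h1, ENNReal.mul_top (ENNReal.ofReal_pos.mpr hm₁pos).ne',
        ENNReal.top_mul ?_]
      · exact le_top
      · simp only [ne_eq, ENNReal.rpow_eq_zero_iff, not_or]
        constructor
        · rintro ⟨h, -⟩; exact hdiam h
        · rintro ⟨h, hγ'⟩; exact absurd hγ' (not_lt.mpr hγ)
  · -- δ > 0
    have hmeas : Measurable fun s : ℝ => ENNReal.ofReal (s ^ (-1 - α)) :=
      (measurable_id.pow_const _).ennreal_ofReal
    by_cases hD : EMetric.diam A < ENNReal.ofReal (δ / 2)
    · -- small diameter case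
      rcases A.eq_empty_or_nonempty with rfl | ⟨x₀, hx₀⟩
      · simp
      have hdne : EMetric.diam A ≠ ⊤ := (hD.trans_le le_top).ne
      set D : ℝ := (EMetric.diam A).toReal with hDdef
      have hD0 : 0 ≤ D := ENNReal.toReal_nonneg
      have hdiamD : EMetric.diam A = ENNReal.ofReal D := (ENNReal.ofReal_toReal hdne).symm
      have hDlt : D < δ / 2 := by
        have := ENNReal.toReal_lt_toReal hdne ENNReal.ofReal_ne_top |>.mpr hD
        rwa [ENNReal.toReal_ofReal (by linarith)] at this
      set c : ℝ := ‖x₀‖ with hcdef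
      have hδc : δ ≤ c := by
        rw [hδdef, hcdef, ← dist_zero_left]
        exact Metric.infDist_le_dist_of_mem hx₀
      have hc0 : 0 < c := lt_of_lt_of_le hδ hδc
      have hx₀ne : x₀ ≠ 0 := by
        intro h; rw [hcdef, h, norm_zero] at hc0; exact lt_irrefl _ hc0
      -- key estimate for r ∈ (D, δ/2)
      have key : ∀ r : ℝ, D < r → r < δ / 2 →
          ν₀ A ≤ ENNReal.ofReal (m₀ * δ ^ (-(α + γ)) * r ^ γ) := by
        intro r hr1 hr2
        have hr0 : 0 < r := lt_of_le_of_lt hD0 hr1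
        have hsubball : A ⊆ Metric.ball x₀ r := by
          intro y hy
          rw [Metric.mem_ball, ← edist_lt_ofReal]
          calc edist y x₀ ≤ EMetric.diam A := EMetric.edist_le_diam_of_mem hy hx₀
            _ = ENNReal.ofReal D := hdiamD
            _ < ENNReal.ofReal r := by exact_mod_cast ENNReal.ofReal_lt_ofReal_iff hr0 |>.mpr hr1
        -- scaling identity
        set B : Set (EuclideanSpace ℝ (Fin d)) := Metric.ball (c⁻¹ • x₀) (r / c) with hBdef
        have hscale : ν₀ (Metric.ball x₀ r) = ENNReal.ofReal (c ^ (-α)) * ν₀ B := by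
          rw [hν _ Metric.isOpen_ball.measurableSet, hν _ Metric.isOpen_ball.measurableSet,
            ← lintegral_const_mul' _ _ ENNReal.ofReal_ne_top]
          refine lintegral_congr fun θ => ?_
          set H : ℝ → ENNReal := fun t =>
            ((fun t : ℝ => t • θ) ⁻¹' B).indicator (fun _ => (1:ENNReal)) t
              * ENNReal.ofReal (t ^ (-1 - α)) with hHdef
          have hHmeas : Measurable H := by
            apply Measurable.mul _ hmeas
            exact (measurable_one.indicator
              (measurableSet_preimage (by fun_prop) Metric.isOpen_ball.measurableSet))
          have step1 : ∫⁻ s in Ioi (0:ℝ),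
              (Metric.ball x₀ r).indicator (fun _ => ENNReal.ofReal (s ^ (-1 - α))) (s • θ)
              = ∫⁻ s in Ioi (0:ℝ), ENNReal.ofReal (c ^ (-1 - α)) * H (c⁻¹ * s) := by
            refine setLIntegral_congr_fun measurableSet_Ioi ?_
            intro s hs
            beta_reduce
            simp only [mem_Ioi] at hs
            have hmemiff : s • θ ∈ Metric.ball x₀ r ↔ (c⁻¹ * s) • θ ∈ B := by
              rw [hBdef, Metric.mem_ball, Metric.mem_ball, dist_eq_norm, dist_eq_norm,
                mul_smul, ← smul_sub, norm_smul, Real.norm_eq_abs,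
                abs_of_pos (inv_pos.2 hc0), div_eq_inv_mul, mul_lt_mul_iff_right₀ (inv_pos.2 hc0)]
            have hval : ENNReal.ofReal (c ^ (-1 - α)) * ENNReal.ofReal ((c⁻¹ * s) ^ (-1 - α))
                = ENNReal.ofReal (s ^ (-1 - α)) := by
              rw [← ENNReal.ofReal_mul (Real.rpow_nonneg hc0.le _),
                ← Real.mul_rpow hc0.le (by positivity),
                show c * (c⁻¹ * s) = s by field_simp]
            by_cases hmem : s • θ ∈ Metric.ball x₀ r
            · rw [Set.indicator_of_mem hmem, hHdef]
              simp only []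
              rw [Set.indicator_of_mem (by simpa using hmemiff.mp hmem), one_mul]
              exact hval.symm
            · rw [Set.indicator_of_notMem hmem, hHdef]
              simp only []
              rw [Set.indicator_of_notMem (by simpa using fun h => hmem (hmemiff.mpr h)),
                zero_mul, mul_zero]
          have step2 : ∫⁻ t in Ioi (0:ℝ), H t
              = ∫⁻ t in Ioi (0:ℝ),
                B.indicator (fun _ => ENNReal.ofReal (t ^ (-1 - α))) (t • θ) := by
            refine setLIntegral_congr_fun measurableSet_Ioi ?_
            intro t ht
            beta_reduce
            rw [hHdef]
            by_cases hmem : t • θ ∈ B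
            · rw [Set.indicator_of_mem hmem]; simp only []
              rw [Set.indicator_of_mem (by simpa using hmem), one_mul]
            · rw [Set.indicator_of_notMem hmem]; simp only []
              rw [Set.indicator_of_notMem (by simpa using hmem), zero_mul]
          rw [step1, lintegral_const_mul' _ _ ENNReal.ofReal_ne_top,
            scale_Ioi c hc0 H hHmeas, step2, ← mul_assoc, ← ENNReal.ofReal_mul
              (Real.rpow_nonneg hc0.le _)]
          congr 2
          rw [← Real.rpow_add_one hc0.ne' (-1 - α)]
          ring_nf
        -- apply hgam to the scaled ball
        have h1 : ‖c⁻¹ • x₀‖ = 1 := by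
          rw [norm_smul, Real.norm_eq_abs, abs_of_pos (inv_pos.2 hc0), ← hcdef,
            inv_mul_cancel₀ hc0.ne']
        have h2 : 0 < r / c := div_pos hr0 hc0
        have h3 : r / c < 1 / 2 := by
          rw [div_lt_div_iff₀ hc0 two_pos]; linarith
        calc ν₀ A ≤ ν₀ (Metric.ball x₀ r) := measure_mono hsubball
          _ = ENNReal.ofReal (c ^ (-α)) * ν₀ B := hscale
          _ ≤ ENNReal.ofReal (c ^ (-α)) * ENNReal.ofReal (m₀ * (r / c) ^ γ) :=
              mul_le_mul_right (hgam _ h1 _ h2 h3) _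
          _ = ENNReal.ofReal (c ^ (-α) * (m₀ * (r / c) ^ γ)) :=
              (ENNReal.ofReal_mul (Real.rpow_nonneg hc0.le _)).symm
          _ ≤ ENNReal.ofReal (m₀ * δ ^ (-(α + γ)) * r ^ γ) := by
              apply ENNReal.ofReal_le_ofReal
              have e1 : c ^ (-α) * (m₀ * (r / c) ^ γ) = m₀ * c ^ (-(α + γ)) * r ^ γ := by
                rw [Real.div_rpow hr0.le hc0.le, show -(α + γ) = -α + -γ by ring,
                  Real.rpow_add hc0, Real.rpow_neg hc0.le γ]
                have : c ^ γ ≠ 0 := (Real.rpow_pos_of_pos hc0 γ).ne'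
                field_simp
              rw [e1]
              have e2 : c ^ (-(α + γ)) ≤ δ ^ (-(α + γ)) :=
                Real.rpow_le_rpow_of_nonpos hδ hδc (by linarith)
              have e3 : (0:ℝ) ≤ r ^ γ := Real.rpow_nonneg hr0.le γ
              exact mul_le_mul_of_nonneg_right (mul_le_mul_of_nonneg_left e2 hm₀.le) e3
      -- pass to the limit r → D⁺
      have hlim : ν₀ A ≤ ENNReal.ofReal (m₀ * δ ^ (-(α + γ)) * D ^ γ) := by
        refine ge_of_tendsto (f := fun r : ℝ => ENNReal.ofReal (m₀ * δ ^ (-(α + γ)) * r ^ γ))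
          (x := nhdsWithin D (Ioi D)) ?_ ?_
        · apply (ENNReal.continuous_ofReal.tendsto _).comp
          apply Filter.Tendsto.mono_left _ nhdsWithin_le_nhds
          exact (Real.continuousAt_rpow_const D γ (Or.inr hγ)).const_mul _
        · filter_upwards [Ioo_mem_nhdsGT_of_mem (Set.mem_Ico.mpr ⟨le_refl D, hDlt⟩)] with r hr
          exact key r hr.1 hr.2
      refine hlim.trans ?_
      rw [hdiamD, ENNReal.ofReal_rpow_of_pos hδ, ENNReal.ofReal_rpow_of_nonneg hD0 hγ,
        ← ENNReal.ofReal_mul hm₁pos.le,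
        ← ENNReal.ofReal_mul (by positivity : (0:ℝ) ≤ m₁ * δ ^ (-(α + γ)))]
      apply ENNReal.ofReal_le_ofReal
      have : (0:ℝ) ≤ δ ^ (-(α + γ)) * D ^ γ := by positivity
      nlinarith [le_max_left m₀ (2 ^ γ * (μ₀ Set.univ).toReal / α)]
    · -- tail case : large diameter
      push_neg at hD
      have hM := measure_ne_top μ₀ Set.univ
      set M : ℝ := (μ₀ Set.univ).toReal with hMdef
      have hM0 : 0 ≤ M := ENNReal.toReal_nonneg
      have htail : ν₀ A ≤ μ₀ Set.univ * ENNReal.ofReal (δ ^ (-α) / α) := by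
        rw [hν A hA]
        have hbound : ∀ᵐ θ ∂μ₀, (∫⁻ s in Ioi (0:ℝ),
            A.indicator (fun _ => ENNReal.ofReal (s ^ (-1 - α))) (s • θ))
            ≤ ENNReal.ofReal (δ ^ (-α) / α) := by
          filter_upwards [hsupp] with θ hθ
          have step : ∀ s ∈ Ioi (0:ℝ),
              A.indicator (fun _ => ENNReal.ofReal (s ^ (-1 - α))) (s • θ)
              ≤ (Ici δ).indicator (fun s => ENNReal.ofReal (s ^ (-1 - α))) s := by
            intro s hs
            simp only [mem_Ioi] at hs
            by_cases hmem : s • θ ∈ A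
            · rw [Set.indicator_of_mem hmem]
              have hsδ : δ ≤ s := by
                have h4 := Metric.infDist_le_dist_of_mem (x := 0) hmem
                rwa [dist_zero_left, norm_smul, Real.norm_eq_abs, abs_of_pos hs, hθ,
                  mul_one, ← hδdef] at h4
              rw [Set.indicator_of_mem (mem_Ici.mpr hsδ)]
            · rw [Set.indicator_of_notMem hmem]; exact zero_le
          calc (∫⁻ s in Ioi (0:ℝ),
                A.indicator (fun _ => ENNReal.ofReal (s ^ (-1 - α))) (s • θ))
              ≤ ∫⁻ s in Ioi (0:ℝ),
                (Ici δ).indicator (fun s => ENNReal.ofReal (s ^ (-1 - α))) s :=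
                setLIntegral_mono (hmeas.indicator measurableSet_Ici) step
            _ = ∫⁻ s in Ici δ, ENNReal.ofReal (s ^ (-1 - α)) := by
                rw [lintegral_indicator measurableSet_Ici,
                  Measure.restrict_restrict measurableSet_Ici]
                have hss : Ici δ ∩ Ioi 0 = Ici δ :=
                  Set.inter_eq_left.mpr (fun s hs => mem_Ioi.mpr (lt_of_lt_of_le hδ hs))
                rw [hss]
            _ = ENNReal.ofReal (δ ^ (-α) / α) := tail_int α δ hα0 hδ
        calc (∫⁻ θ, (∫⁻ s in Ioi (0:ℝ),
              A.indicator (fun _ => ENNReal.ofReal (s ^ (-1 - α))) (s • θ)) ∂μ₀)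
            ≤ ∫⁻ _, ENNReal.ofReal (δ ^ (-α) / α) ∂μ₀ := lintegral_mono_ae hbound
          _ = ENNReal.ofReal (δ ^ (-α) / α) * μ₀ univ := lintegral_const _
          _ = μ₀ univ * ENNReal.ofReal (δ ^ (-α) / α) := mul_comm _ _
      refine htail.trans ?_
      have hμeq : μ₀ Set.univ = ENNReal.ofReal M := (ENNReal.ofReal_toReal hM).symm
      have hreal : M * (δ ^ (-α) / α) ≤ m₁ * δ ^ (-(α + γ)) * (δ / 2) ^ γ := by
        have h2γ : (0:ℝ) < 2 ^ γ := Real.rpow_pos_of_pos two_pos γ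
        have hδα : (0:ℝ) < δ ^ (-α) := Real.rpow_pos_of_pos hδ _
        have hδγ : (0:ℝ) < δ ^ γ := Real.rpow_pos_of_pos hδ γ
        have e : m₁ * δ ^ (-(α + γ)) * (δ / 2) ^ γ = m₁ / 2 ^ γ * δ ^ (-α) := by
          rw [Real.div_rpow hδ0 (by norm_num : (0:ℝ) ≤ 2), show -(α + γ) = -α + -γ by ring,
            Real.rpow_add hδ, Real.rpow_neg hδ0 γ]
          field_simp
        have hm : M / α ≤ m₁ / 2 ^ γ := by
          rw [div_le_div_iff₀ hα0 h2γ]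
          have h5 := le_max_right m₀ (2 ^ γ * M / α)
          rw [div_le_iff₀ hα0] at h5
          linarith
        rw [e]
        calc M * (δ ^ (-α) / α) = M / α * δ ^ (-α) := by ring
          _ ≤ m₁ / 2 ^ γ * δ ^ (-α) := mul_le_mul_of_nonneg_right hm hδα.le
      calc μ₀ Set.univ * ENNReal.ofReal (δ ^ (-α) / α)
          = ENNReal.ofReal (M * (δ ^ (-α) / α)) := by
            rw [hμeq, ← ENNReal.ofReal_mul hM0]
        _ ≤ ENNReal.ofReal (m₁ * δ ^ (-(α + γ)) * (δ / 2) ^ γ) :=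
            ENNReal.ofReal_le_ofReal hreal
        _ = ENNReal.ofReal m₁ * ENNReal.ofReal δ ^ (-(α + γ)) *
            ENNReal.ofReal (δ / 2) ^ γ := by
            rw [ENNReal.ofReal_rpow_of_pos hδ,
              ENNReal.ofReal_rpow_of_pos (by linarith : (0:ℝ) < δ / 2),
              ← ENNReal.ofReal_mul hm₁pos.le,
              ← ENNReal.ofReal_mul (by positivity : (0:ℝ) ≤ m₁ * δ ^ (-(α + γ)))]
        _ ≤ ENNReal.ofReal m₁ * ENNReal.ofReal δ ^ (-(α + γ)) * (EMetric.diam A) ^ γ :=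
            mul_le_mul_right (ENNReal.rpow_le_rpow hD hγ) _
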